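/- arXiv:1111.5756 — 3 statements merged into one kernel-verified Lean document; each statement's English description precedes it below -/
import Mathlib

section
/- Let G be a 2-connected weighted graph (a finite simple graph with a non-negative real weight on each edge), let x and y be two vertices of G, and let d be a real number. If every vertex v of G other than x and y has weighted degree at least d, then G contains a path with end-vertices x and y whose weight (sum of the weights of its edges) is at least d. -/
open SimpleGraph

variable {V : Type*}

/-- A graph is 2-connected if it has at least 3 vertices and remains
connected after deleting any single vertex. -/
def SimpleGraph.TwoConnected (G : SimpleGraph V) : Prop :=
  3 ≤ Nat.card V ∧ ∀ v : V, (G.induce {u : V | u ≠ v}).Connected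

/-- The weighted degree of a vertex: sum of the weights of incident edges. -/
noncomputable def SimpleGraph.wDeg (G : SimpleGraph V) (w : V → V → ℝ) (v : V) : ℝ :=
  ∑ᶠ u ∈ {u : V | G.Adj v u}, w v u

/-- The weight of a walk: the sum of the weights of its edges. -/
def SimpleGraph.Walk.wWeight {G : SimpleGraph V} (w : V → V → ℝ) {u v : V}
    (p : G.Walk u v) : ℝ :=
  (p.darts.map fun d => w d.toProd.1 d.toProd.2).sum

namespace BF

lemma wWeight_nil {G : SimpleGraph V} (w : V → V → ℝ) {u : V} :
    (Walk.nil : G.Walk u u).wWeight w = 0 := rfl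

lemma wWeight_cons {G : SimpleGraph V} (w : V → V → ℝ) {u v z : V} (h : G.Adj u v)
    (p : G.Walk v z) : (Walk.cons h p).wWeight w = w u v + p.wWeight w := by
  simp [Walk.wWeight, Walk.darts_cons]

lemma wWeight_append {G : SimpleGraph V} (w : V → V → ℝ) {u v z : V} (p : G.Walk u v)
    (q : G.Walk v z) : (p.append q).wWeight w = p.wWeight w + q.wWeight w := by
  simp [Walk.wWeight, Walk.darts_append]

lemma wWeight_nonneg {G : SimpleGraph V} {w : V → V → ℝ} (hnn : ∀ u v, 0 ≤ w u v)
    {u v : V} (p : G.Walk u v) : 0 ≤ p.wWeight w := by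
  apply List.sum_nonneg
  intro a ha
  simp only [List.mem_map] at ha
  obtain ⟨d, _, rfl⟩ := ha
  exact hnn _ _

lemma wWeight_eq_of_darts_eq {G₁ G₂ : SimpleGraph V} (w : V → V → ℝ) {u v : V}
    (p : G₁.Walk u v) (q : G₂.Walk u v)
    (h : q.darts.map (fun d => d.toProd) = p.darts.map (fun d => d.toProd)) :
    q.wWeight w = p.wWeight w := by
  unfold Walk.wWeight
  have h1 : (q.darts.map fun d => d.toProd).map (fun pr => w pr.1 pr.2)
      = (p.darts.map fun d => d.toProd).map (fun pr => w pr.1 pr.2) := by rw [h]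
  simpa [List.map_map, Function.comp_def] using congrArg List.sum h1

lemma wWeight_congr {G : SimpleGraph V} (w₁ w₂ : V → V → ℝ) {u v : V} (p : G.Walk u v)
    (h : ∀ d ∈ p.darts, w₁ d.toProd.1 d.toProd.2 = w₂ d.toProd.1 d.toProd.2) :
    p.wWeight w₁ = p.wWeight w₂ := by
  unfold Walk.wWeight
  exact congrArg List.sum (List.map_congr_left h)

lemma convertWalk {G₁ G₂ : SimpleGraph V} {u v : V} (p : G₁.Walk u v)
    (h : ∀ d ∈ p.darts, G₂.Adj d.toProd.1 d.toProd.2) :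
    ∃ q : G₂.Walk u v, q.support = p.support ∧
      q.darts.map (fun d => d.toProd) = p.darts.map (fun d => d.toProd) := by
  induction p with
  | nil => exact ⟨.nil, rfl, rfl⟩
  | @cons a b c h' p ih =>
    have hm : (⟨(a, b), h'⟩ : G₁.Dart) ∈ (Walk.cons h' p).darts := by
      simp [Walk.darts_cons]
    obtain ⟨q, hs, hd⟩ := ih (fun d hd => h d (by rw [Walk.darts_cons]; exact List.mem_cons_of_mem _ hd))
    refine ⟨.cons (h _ hm) q, ?_, ?_⟩
    · simp [Walk.support_cons, hs]
    · simp [Walk.darts_cons, hd]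

/-- Reachability within a vertex predicate. -/
def Reach (G : SimpleGraph V) (A : V → Prop) (u v : V) : Prop :=
  ∃ p : G.Walk u v, ∀ z ∈ p.support, A z

lemma Reach.refl {G : SimpleGraph V} {A : V → Prop} {u : V} (hu : A u) : Reach G A u u :=
  ⟨.nil, by simpa using hu⟩

lemma Reach.symm {G : SimpleGraph V} {A : V → Prop} {u v : V} (h : Reach G A u v) :
    Reach G A v u := by
  obtain ⟨p, hp⟩ := h
  exact ⟨p.reverse, by intro z hz; exact hp z (by simpa [Walk.support_reverse] using hz)⟩

lemma Reach.trans {G : SimpleGraph V} {A : V → Prop} {u v z : V} (h1 : Reach G A u v)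
    (h2 : Reach G A v z) : Reach G A u z := by
  obtain ⟨p, hp⟩ := h1; obtain ⟨q, hq⟩ := h2
  refine ⟨p.append q, ?_⟩
  intro a ha
  rw [Walk.support_append] at ha
  rcases List.mem_append.1 ha with h | h
  · exact hp _ h
  · exact hq _ (List.mem_of_mem_tail h)

lemma Reach.edge {G : SimpleGraph V} {A : V → Prop} {u v : V} (h : G.Adj u v)
    (hu : A u) (hv : A v) : Reach G A u v :=
  ⟨.cons h .nil, by intro z hz; simp [Walk.support_cons] at hz; rcases hz with rfl | rfl <;> assumption⟩

lemma Reach.mono {G : SimpleGraph V} {A B : V → Prop} (hAB : ∀ z, A z → B z) {u v : V}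
    (h : Reach G A u v) : Reach G B u v := by
  obtain ⟨p, hp⟩ := h; exact ⟨p, fun z hz => hAB z (hp z hz)⟩

lemma Reach.transfer {G₁ G₂ : SimpleGraph V} {A : V → Prop}
    (hadj : ∀ u v, A u → A v → G₁.Adj u v → G₂.Adj u v) {u v : V}
    (h : Reach G₁ A u v) : Reach G₂ A u v := by
  obtain ⟨p, hp⟩ := h
  have hcond : ∀ d ∈ p.darts, G₂.Adj d.toProd.1 d.toProd.2 := by
    intro d hd
    exact hadj _ _ (hp _ (p.dart_fst_mem_support_of_mem_darts hd))
      (hp _ (p.dart_snd_mem_support_of_mem_darts hd)) d.adj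
  obtain ⟨q, hs, _⟩ := convertWalk (G₂ := G₂) p hcond
  exact ⟨q, by rw [hs]; exact hp⟩

lemma Reach.mem_left {G : SimpleGraph V} {A : V → Prop} {u v : V} (h : Reach G A u v) : A u := by
  obtain ⟨p, hp⟩ := h; exact hp u p.start_mem_support

lemma Reach.mem_right {G : SimpleGraph V} {A : V → Prop} {u v : V} (h : Reach G A u v) : A v := by
  obtain ⟨p, hp⟩ := h; exact hp v p.end_mem_support

lemma reach_of_support {G : SimpleGraph V} {A : V → Prop} {u v : V} (p : G.Walk u v)
    (hp : ∀ z ∈ p.support, A z) : ∀ z ∈ p.support, Reach G A u z := by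
  induction p with
  | nil =>
    intro z hz
    simp at hz; subst hz
    exact Reach.refl (hp _ (by simp))
  | @cons a b c h' p ih =>
    intro z hz
    rw [Walk.support_cons] at hz
    rcases List.mem_cons.1 hz with rfl | hz'
    · exact Reach.refl (hp _ (by simp [Walk.support_cons]))
    · have hA : ∀ z ∈ p.support, A z := fun z hz =>
        hp z (by rw [Walk.support_cons]; exact List.mem_cons_of_mem _ hz)
      have ha : A a := hp _ (by simp [Walk.support_cons])
      have hb : A b := hA _ p.start_mem_support
      exact (Reach.edge h' ha hb).trans (ih hA z hz')

/-- Walk exits a set: find the first exit edge. -/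
lemma exitLemma {G : SimpleGraph V} {A : V → Prop} {u z : V} (p : G.Walk u z)
    (hu : A u) (hz : ¬ A z) :
    ∃ u' t, A u' ∧ ¬ A t ∧ G.Adj u' t ∧ t ∈ p.support ∧ Reach G A u u' := by
  revert hu hz
  induction p with
  | nil => exact fun hu hz => absurd hu hz
  | @cons a b c h' p ih =>
    intro hu hz
    by_cases hb : A b
    · obtain ⟨u', t, h1, h2, h3, h4, h5⟩ := ih hb hz
      refine ⟨u', t, h1, h2, h3, ?_, (Reach.edge h' hu hb).trans h5⟩
      rw [Walk.support_cons]
      exact List.mem_cons_of_mem _ h4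
    · refine ⟨a, b, hu, hb, h', ?_, Reach.refl hu⟩
      rw [Walk.support_cons]
      exact List.mem_cons_of_mem _ p.start_mem_support

lemma isPath_append {G : SimpleGraph V} {u v z : V} {p : G.Walk u v} {q : G.Walk v z}
    (hp : p.IsPath) (hq : q.IsPath) (hint : ∀ a, a ∈ p.support → a ∈ q.support → a = v) :
    (p.append q).IsPath := by
  rw [Walk.isPath_def, Walk.support_append, List.nodup_append]
  refine ⟨hp.support_nodup, hq.support_nodup.tail, ?_⟩
  intro a hap b haq hab
  subst hab
  have haq' : a ∈ q.support := List.mem_of_mem_tail haq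
  have hav : a = v := hint a hap haq'
  subst hav
  have hcons : q.support = a :: q.support.tail := q.support_eq_cons
  have hnd := hq.support_nodup
  rw [hcons] at hnd
  exact (List.nodup_cons.1 hnd).1 haq

open scoped Classical in
lemma wDeg_eq_sum [Fintype V] (G : SimpleGraph V) (w : V → V → ℝ) (v : V) :
    G.wDeg w v = ∑ u : V, if G.Adj v u then w v u else 0 := by
  rw [SimpleGraph.wDeg]
  have h : {u : V | G.Adj v u} = ↑(Finset.univ.filter fun u => G.Adj v u) := by
    ext u; simp
  rw [h, finsum_mem_coe_finset, Finset.sum_filter]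

lemma adj_of_reach_pair {G : SimpleGraph V} {A : V → Prop} {x z : V} (hxz : x ≠ z)
    (h : Reach G A x z) (hA : ∀ u, A u → u = x ∨ u = z) : G.Adj x z := by
  obtain ⟨p, hp⟩ := h
  cases p with
  | nil => exact absurd rfl hxz
  | @cons _ b _ h' q =>
    have hb := hp b (by rw [Walk.support_cons]; exact List.mem_cons_of_mem _ q.start_mem_support)
    rcases hA _ hb with rfl | rfl
    · exact absurd h' (G.loopless.irrefl _)
    · exact h'

lemma firstStep {G : SimpleGraph V} {A : V → Prop} {u v : V} (h : Reach G A u v)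
    (hne : u ≠ v) : ∃ b, G.Adj u b ∧ A b := by
  obtain ⟨p, hp⟩ := h
  cases p with
  | nil => exact absurd rfl hne
  | @cons _ b _ h' q =>
    exact ⟨b, h', hp b (by rw [Walk.support_cons]; exact List.mem_cons_of_mem _ q.start_mem_support)⟩

/-- The "two-connectedness inside a finset" working hypothesis. -/
def TwoConnOn (G : SimpleGraph V) (s : Finset V) : Prop :=
  ∀ v ∈ s, ∀ u₁ ∈ s, ∀ u₂ ∈ s, u₁ ≠ v → u₂ ≠ v →
    Reach G (fun z => z ∈ s ∧ z ≠ v) u₁ u₂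

/-- The conclusion we want. -/
def Concl (G : SimpleGraph V) (w : V → V → ℝ) (s : Finset V) (x y : V) (d : ℝ) : Prop :=
  ∃ p : G.Walk x y, p.IsPath ∧ (∀ z ∈ p.support, z ∈ s) ∧ d ≤ p.wWeight w


lemma third_vertex {s : Finset V} (h3 : 3 ≤ s.card) {x y : V} (hx : x ∈ s) (hy : y ∈ s) :
    ∃ z ∈ s, z ≠ x ∧ z ≠ y := by
  classical
  have h1 : 1 ≤ ((s.erase x).erase y).card := by
    have e1 : (s.erase x).card = s.card - 1 := Finset.card_erase_of_mem hx
    have e2 : ((s.erase x).erase y).card = (s.erase x).card - 1 ∨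
        ((s.erase x).erase y).card = (s.erase x).card := by
      by_cases hmem : y ∈ s.erase x
      · exact Or.inl (Finset.card_erase_of_mem hmem)
      · exact Or.inr (by rw [Finset.erase_eq_of_notMem hmem])
    omega
  obtain ⟨z, hz⟩ := Finset.card_pos.1 h1
  rw [Finset.mem_erase, Finset.mem_erase] at hz
  exact ⟨z, hz.2.2, hz.2.1, hz.1⟩

lemma trivialCase [Fintype V] (G : SimpleGraph V) (w : V → V → ℝ) (s : Finset V)
    (hnn : ∀ u v, 0 ≤ w u v) (h3 : 3 ≤ s.card) (h2c : TwoConnOn G s)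
    (x y : V) (hx : x ∈ s) (hy : y ∈ s) (hxy : x ≠ y) (d : ℝ) (hd0 : d ≤ 0) :
    Concl G w s x y d := by
  classical
  obtain ⟨z, hzs, hzx, hzy⟩ := third_vertex h3 hx hy
  obtain ⟨p, hp⟩ := h2c z hzs x hx y hy (Ne.symm hzx) (Ne.symm hzy)
  refine ⟨p.bypass, p.bypass_isPath, ?_, le_trans hd0 (wWeight_nonneg hnn _)⟩
  intro a ha
  exact (hp a (p.support_bypass_subset ha)).1

lemma base3 [Fintype V] (G : SimpleGraph V) (w : V → V → ℝ) (s : Finset V)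
    (hsymm : ∀ u v, w u v = w v u)
    (hedge : ∀ u v, G.Adj u v → u ∈ s ∧ v ∈ s)
    (hcard : s.card = 3) (h2c : TwoConnOn G s)
    (x y : V) (hx : x ∈ s) (hy : y ∈ s) (hxy : x ≠ y) (d : ℝ)
    (hd : ∀ v ∈ s, v ≠ x → v ≠ y → d ≤ G.wDeg w v) :
    Concl G w s x y d := by
  classical
  obtain ⟨z, hzs, hzx, hzy⟩ := third_vertex (by omega) hx hy
  have hxyz : ({x, y, z} : Finset V).card = 3 := by
    rw [Finset.card_insert_of_notMem (by simp [hxy, Ne.symm hzx]),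
      Finset.card_insert_of_notMem (by simp [Ne.symm hzy]), Finset.card_singleton]
  have hseq : s = {x, y, z} := by
    refine (Finset.eq_of_subset_of_card_le ?_ (by omega)).symm
    intro a ha
    simp only [Finset.mem_insert, Finset.mem_singleton] at ha
    rcases ha with rfl | rfl | rfl <;> assumption
  have hmem3 : ∀ u ∈ s, u = x ∨ u = y ∨ u = z := by
    intro u hu
    rw [hseq] at hu
    simpa using hu
  have hadjxz : G.Adj x z := by
    refine adj_of_reach_pair (Ne.symm hzx) (h2c y hy x hx z hzs hxy hzy) ?_
    intro u hu
    rcases hmem3 u hu.1 with rfl | rfl | rfl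
    · exact Or.inl rfl
    · exact absurd rfl hu.2
    · exact Or.inr rfl
  have hadjzy : G.Adj z y := by
    refine adj_of_reach_pair hzy (h2c x hx z hzs y hy hzx (Ne.symm hxy)) ?_
    intro u hu
    rcases hmem3 u hu.1 with rfl | rfl | rfl
    · exact absurd rfl hu.2
    · exact Or.inr rfl
    · exact Or.inl rfl
  refine ⟨Walk.cons hadjxz (Walk.cons hadjzy Walk.nil), ?_, ?_, ?_⟩
  · rw [Walk.isPath_def]
    simp [Walk.support_cons, hxy, Ne.symm hzx, hzy]
  · intro a ha
    have : a = x ∨ a = z ∨ a = y := by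
      simpa [Walk.support_cons, Walk.support_nil] using ha
    rcases this with rfl | rfl | rfl
    · exact hx
    · exact hzs
    · exact hy
  · have hset : {u : V | G.Adj z u} = ({x, y} : Set V) := by
      ext u
      simp only [Set.mem_setOf_eq, Set.mem_insert_iff, Set.mem_singleton_iff]
      constructor
      · intro h
        rcases hmem3 u (hedge _ _ h).2 with rfl | rfl | rfl
        · exact Or.inl rfl
        · exact Or.inr rfl
        · exact absurd rfl h.ne'
      · rintro (rfl | rfl)
        · exact hadjxz.symm
        · exact hadjzy
    have hdz := hd z hzs hzx hzy
    rw [SimpleGraph.wDeg, hset, finsum_mem_pair hxy] at hdz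
    calc d ≤ w z x + w z y := hdz
    _ = (Walk.cons hadjxz (Walk.cons hadjzy Walk.nil)).wWeight w := by
        rw [wWeight_cons, wWeight_cons, wWeight_nil, hsymm z x]; ring

section Main

variable [Fintype V]

variable (V) in
/-- Type of the induction hypothesis available below cardinality bound. -/
def IHtype (m : ℕ) : Prop :=
  ∀ (s : Finset V) (G : SimpleGraph V) (w : V → V → ℝ),
    s.card < m →
    (∀ u v, w u v = w v u) → (∀ u v, 0 ≤ w u v) →
    (∀ u v, G.Adj u v → u ∈ s ∧ v ∈ s) →
    3 ≤ s.card →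
    TwoConnOn G s →
    ∀ x y : V, x ∈ s → y ∈ s → x ≠ y → ∀ d : ℝ,
      (∀ v ∈ s, v ≠ x → v ≠ y → d ≤ G.wDeg w v) →
      Concl G w s x y d


lemma cutCase (G : SimpleGraph V) (w : V → V → ℝ) (s : Finset V)
    (hsymm : ∀ u v, w u v = w v u) (hnn : ∀ u v, 0 ≤ w u v)
    (hedge : ∀ u v, G.Adj u v → u ∈ s ∧ v ∈ s)
    (h2c : TwoConnOn G s)
    (x y : V) (hx : x ∈ s) (hy : y ∈ s) (hxy : x ≠ y) (d : ℝ) (hd0 : 0 < d)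
    (hd : ∀ v ∈ s, v ≠ x → v ≠ y → d ≤ G.wDeg w v)
    (c : V) (hcs : c ∈ s) (hcx : c ≠ x)
    (u₀ uout : V) (hu₀ : u₀ ∈ s ∧ u₀ ≠ x ∧ u₀ ≠ c) (huout : uout ∈ s ∧ uout ≠ x ∧ uout ≠ c)
    (hnr : ¬ Reach G (fun z => z ∈ s ∧ z ≠ x ∧ z ≠ c) u₀ uout)
    (hny : ¬ Reach G (fun z => z ∈ s ∧ z ≠ x ∧ z ≠ c) u₀ y)
    (IH : IHtype V s.card) :
    Concl G w s x y d := by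
  classical
  set A₀ : V → Prop := fun z => z ∈ s ∧ z ≠ x ∧ z ≠ c with hA₀def
  set KP : V → Prop := fun u => Reach G A₀ u₀ u with hKPdef
  have hKPA : ∀ u, KP u → A₀ u := fun u h => h.mem_right
  have hKPu₀ : KP u₀ := Reach.refl hu₀
  have hclosure : ∀ u v, KP u → G.Adj u v → A₀ v → KP v :=
    fun u v hu hadj hv => hu.trans (Reach.edge hadj (hKPA u hu) hv)
  have hKPuout : ¬ KP uout := hnr
  have hKPy : ¬ KP y := hny
  have hKPx : ¬ KP x := fun h => (hKPA x h).2.1 rfl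
  have hKPc : ¬ KP c := fun h => (hKPA c h).2.2 rfl
  set T : Finset V := insert x (insert c (s.filter fun u => KP u)) with hTdef
  have hTmem : ∀ z, z ∈ T ↔ z = x ∨ z = c ∨ KP z := by
    intro z
    rw [hTdef]
    simp only [Finset.mem_insert, Finset.mem_filter]
    constructor
    · rintro (rfl | rfl | ⟨_, h⟩)
      · exact Or.inl rfl
      · exact Or.inr (Or.inl rfl)
      · exact Or.inr (Or.inr h)
    · rintro (rfl | rfl | h)
      · exact Or.inl rfl
      · exact Or.inr (Or.inl rfl)
      · exact Or.inr (Or.inr ⟨(hKPA z h).1, h⟩)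
  have hxT : x ∈ T := (hTmem x).2 (Or.inl rfl)
  have hcT : c ∈ T := (hTmem c).2 (Or.inr (Or.inl rfl))
  have hKT : ∀ z, KP z → z ∈ T := fun z h => (hTmem z).2 (Or.inr (Or.inr h))
  have hTsub : T ⊆ s := by
    intro z hz
    rcases (hTmem z).1 hz with rfl | rfl | h
    · exact hx
    · exact hcs
    · exact (hKPA z h).1
  have huoutT : uout ∉ T := by
    intro hcon
    rcases (hTmem uout).1 hcon with rfl | rfl | h
    · exact huout.2.1 rfl
    · exact huout.2.2 rfl
    · exact hKPuout h
  have hTlt : T.card < s.card :=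
    Finset.card_lt_card ⟨hTsub, fun hcon => huoutT (hcon huout.1)⟩
  have hu₀x : u₀ ≠ x := hu₀.2.1
  have hu₀c : u₀ ≠ c := hu₀.2.2
  have hT3 : 3 ≤ T.card := by
    have hsub3 : ({x, c, u₀} : Finset V) ⊆ T := by
      intro z hz
      simp only [Finset.mem_insert, Finset.mem_singleton] at hz
      rcases hz with rfl | rfl | rfl
      · exact hxT
      · exact hcT
      · exact hKT _ hKPu₀
    have hc3 : ({x, c, u₀} : Finset V).card = 3 := by
      rw [Finset.card_insert_of_notMem (by simp [Ne.symm hcx, Ne.symm hu₀x]),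
        Finset.card_insert_of_notMem (by simp [Ne.symm hu₀c]), Finset.card_singleton]
    calc 3 = ({x, c, u₀} : Finset V).card := hc3.symm
    _ ≤ T.card := Finset.card_le_card hsub3
  -- the auxiliary graph with an extra x-c edge
  set G₂ : SimpleGraph V := {
    Adj := fun u v => (G.Adj u v ∧ u ∈ T ∧ v ∈ T) ∨ (u = x ∧ v = c) ∨ (u = c ∧ v = x),
    symm := by
      constructor
      rintro u v (⟨h1, h2, h3⟩ | ⟨rfl, rfl⟩ | ⟨rfl, rfl⟩)
      · exact Or.inl ⟨h1.symm, h3, h2⟩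
      · exact Or.inr (Or.inr ⟨rfl, rfl⟩)
      · exact Or.inr (Or.inl ⟨rfl, rfl⟩)
    loopless := by
      constructor
      rintro u (⟨h1, _, _⟩ | ⟨rfl, h2⟩ | ⟨rfl, h2⟩)
      · exact h1.ne rfl
      · exact hcx h2.symm
      · exact hcx h2 } with hG₂def
  have hG₂adj : ∀ u v, G₂.Adj u v ↔
      ((G.Adj u v ∧ u ∈ T ∧ v ∈ T) ∨ (u = x ∧ v = c) ∨ (u = c ∧ v = x)) := fun u v => Iff.rfl
  set w₂ : V → V → ℝ := fun u v => if G.Adj u v then w u v else 0 with hw₂def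
  have hsymm₂ : ∀ u v, w₂ u v = w₂ v u := by
    intro u v
    rw [hw₂def]
    by_cases h : G.Adj u v
    · simp [h, h.symm, hsymm u v]
    · have h' : ¬ G.Adj v u := fun hh => h hh.symm
      simp [h, h']
  have hnn₂ : ∀ u v, 0 ≤ w₂ u v := by
    intro u v
    rw [hw₂def]
    by_cases h : G.Adj u v <;> simp [h, hnn]
  have hedge₂ : ∀ u v, G₂.Adj u v → u ∈ T ∧ v ∈ T := by
    rintro u v (⟨_, h2, h3⟩ | ⟨rfl, rfl⟩ | ⟨rfl, rfl⟩)
    · exact ⟨h2, h3⟩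
    · exact ⟨hxT, hcT⟩
    · exact ⟨hcT, hxT⟩
  -- K attaches to both c and x
  have hKc : ∃ k, KP k ∧ G.Adj k c := by
    obtain ⟨p, hp⟩ := h2c x hx u₀ hu₀.1 uout huout.1 hu₀x huout.2.1
    obtain ⟨u', t, hA1, hA2, hA3, hA4, _⟩ := exitLemma (A := KP) p hKPu₀ hKPuout
    have htm := hp t hA4
    have htc : t = c := by
      by_contra hcon
      exact hA2 (hclosure _ _ hA1 hA3 ⟨htm.1, htm.2, hcon⟩)
    exact ⟨u', hA1, htc ▸ hA3⟩
  have hKx : ∃ k, KP k ∧ G.Adj k x := by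
    obtain ⟨p, hp⟩ := h2c c hcs u₀ hu₀.1 x hx hu₀c (Ne.symm hcx)
    obtain ⟨u', t, hA1, hA2, hA3, hA4, _⟩ := exitLemma (A := KP) p hKPu₀ hKPx
    have htm := hp t hA4
    have htx : t = x := by
      by_contra hcon
      exact hA2 (hclosure _ _ hA1 hA3 ⟨htm.1, hcon, htm.2⟩)
    exact ⟨u', hA1, htx ▸ hA3⟩
  -- reachability inside K transfers to G₂
  have hKreach : ∀ k, KP k → Reach G₂ (fun z => z ∈ T ∧ z ≠ x ∧ z ≠ c) u₀ k := by
    intro k hk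
    obtain ⟨p, hp⟩ := hk
    have hsupKP := reach_of_support p hp
    have hp' : ∀ z ∈ p.support, z ∈ T ∧ z ≠ x ∧ z ≠ c := by
      intro z hz
      have hkz : KP z := hsupKP z hz
      exact ⟨hKT z hkz, (hKPA z hkz).2.1, (hKPA z hkz).2.2⟩
    refine Reach.transfer ?_ ⟨p, hp'⟩
    intro p' q' hp'' hq'' hpq
    exact Or.inl ⟨hpq, hp''.1, hq''.1⟩
  have hKreach' : ∀ k k', KP k → KP k' →
      Reach G₂ (fun z => z ∈ T ∧ z ≠ x ∧ z ≠ c) k k' :=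
    fun k k' h1 h2 => (hKreach k h1).symm.trans (hKreach k' h2)
  -- two-connectivity of the auxiliary graph
  have h2c₂ : TwoConnOn G₂ T := by
    intro v hv u₁ hu₁ u₂ hu₂ h1 h2
    by_cases hvx : v = x
    · have hub : ∀ u ∈ T, u ≠ x → Reach G₂ (fun z => z ∈ T ∧ z ≠ x) u c := by
        intro u hu hux
        rcases (hTmem u).1 hu with h | h | hKPu
        · exact absurd h hux
        · rw [h]
          exact Reach.refl ⟨hcT, hcx⟩
        · obtain ⟨k, hk, hkc⟩ := hKc
          have hadj₂ : G₂.Adj k c := Or.inl ⟨hkc, hKT k hk, hcT⟩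
          exact ((hKreach' u k hKPu hk).mono (fun z hz => ⟨hz.1, hz.2.1⟩)).trans
            (Reach.edge hadj₂ ⟨hKT k hk, (hKPA k hk).2.1⟩ ⟨hcT, hcx⟩)
      rw [hvx] at h1 h2 ⊢
      exact (hub u₁ hu₁ h1).trans (hub u₂ hu₂ h2).symm
    · by_cases hvc : v = c
      · have hub : ∀ u ∈ T, u ≠ c → Reach G₂ (fun z => z ∈ T ∧ z ≠ c) u x := by
          intro u hu huc
          rcases (hTmem u).1 hu with h | h | hKPu
          · rw [h]
            exact Reach.refl ⟨hxT, Ne.symm hcx⟩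
          · exact absurd h huc
          · obtain ⟨k, hk, hkx⟩ := hKx
            have hadj₂ : G₂.Adj k x := Or.inl ⟨hkx, hKT k hk, hxT⟩
            exact ((hKreach' u k hKPu hk).mono (fun z hz => ⟨hz.1, hz.2.2⟩)).trans
              (Reach.edge hadj₂ ⟨hKT k hk, (hKPA k hk).2.2⟩ ⟨hxT, Ne.symm hcx⟩)
        rw [hvc] at h1 h2 ⊢
        exact (hub u₁ hu₁ h1).trans (hub u₂ hu₂ h2).symm
      · have hub : ∀ u ∈ T, u ≠ v → Reach G₂ (fun z => z ∈ T ∧ z ≠ v) u x := by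
          intro u hu hune
          rcases (hTmem u).1 hu with h | h | hKPu
          · rw [h]
            exact Reach.refl ⟨hxT, fun hh => hvx hh.symm⟩
          · rw [h]
            exact Reach.edge (Or.inr (Or.inr ⟨rfl, rfl⟩)) ⟨hcT, fun hh => hvc hh.symm⟩
              ⟨hxT, fun hh => hvx hh.symm⟩
          · obtain ⟨p, hp⟩ := h2c v (hTsub hv) u (hTsub hu) x hx hune (fun h => hvx h.symm)
            obtain ⟨u', t, hA1, hA2, hA3, hA4, hA5⟩ :=
              exitLemma (A := fun z => KP z ∧ z ≠ v) p ⟨hKPu, hune⟩ (fun h => hKPx h.1)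
            have htm := hp t hA4
            have htxc : t = x ∨ t = c := by
              by_contra hcon
              push_neg at hcon
              have hKPt : KP t := hclosure _ _ hA1.1 hA3 ⟨htm.1, hcon.1, hcon.2⟩
              exact hA2 ⟨hKPt, htm.2⟩
            have hreachu' : Reach G₂ (fun z => z ∈ T ∧ z ≠ v) u u' := by
              refine Reach.mono ?_ (Reach.transfer ?_ hA5)
              · intro zz hzz; exact ⟨hKT zz hzz.1, hzz.2⟩
              · intro p' q' hp' hq' hpq
                exact Or.inl ⟨hpq, hKT _ hp'.1, hKT _ hq'.1⟩
            have hu'B : u' ∈ T ∧ u' ≠ v := ⟨hKT u' hA1.1, hA1.2⟩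
            rcases htxc with h | h
            · rw [h] at hA3
              exact hreachu'.trans (Reach.edge (Or.inl ⟨hA3, hu'B.1, hxT⟩) hu'B
                ⟨hxT, fun hh => hvx hh.symm⟩)
            · rw [h] at hA3
              refine hreachu'.trans (Reach.trans
                (Reach.edge (A := fun z => z ∈ T ∧ z ≠ v) (Or.inl ⟨hA3, hu'B.1, hcT⟩)
                  hu'B ⟨hcT, fun hh => hvc hh.symm⟩)
                (Reach.edge (A := fun z => z ∈ T ∧ z ≠ v) (Or.inr (Or.inr ⟨rfl, rfl⟩))
                  ⟨hcT, fun hh => hvc hh.symm⟩ ⟨hxT, fun hh => hvx hh.symm⟩))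
        exact (hub u₁ hu₁ h1).trans (hub u₂ hu₂ h2).symm
  -- degrees in the auxiliary graph
  have hd₂ : ∀ v ∈ T, v ≠ x → v ≠ c → d ≤ G₂.wDeg w₂ v := by
    intro v hv hvx hvc
    have hKPv : KP v := by
      rcases (hTmem v).1 hv with h | h | h
      · exact absurd h hvx
      · exact absurd h hvc
      · exact h
    have hvA := hKPA v hKPv
    have hvy : v ≠ y := fun h => hKPy (h ▸ hKPv)
    have hdv := hd v hvA.1 hvA.2.1 hvy
    have hset : {u : V | G₂.Adj v u} = {u : V | G.Adj v u} := by
      ext u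
      simp only [Set.mem_setOf_eq]
      constructor
      · rintro (⟨h, _, _⟩ | ⟨h1, _⟩ | ⟨h1, _⟩)
        · exact h
        · exact absurd h1 hvx
        · exact absurd h1 hvc
      · intro h
        have huT : u ∈ T := by
          by_cases hux : u = x
          · exact hux ▸ hxT
          · by_cases huc : u = c
            · exact huc ▸ hcT
            · exact hKT u (hclosure v u hKPv h ⟨(hedge _ _ h).2, hux, huc⟩)
        exact Or.inl ⟨h, hv, huT⟩
    have heq : G₂.wDeg w₂ v = G.wDeg w v := by
      rw [SimpleGraph.wDeg, SimpleGraph.wDeg]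
      refine finsum_mem_congr hset ?_
      intro u hu
      rw [hw₂def]
      simp only [Set.mem_setOf_eq] at hu
      simp [hu]
    rw [heq]
    exact hdv
  -- apply the induction hypothesis to get a heavy x-c path in G₂
  obtain ⟨Q, hQp, hQs, hQw⟩ := IH T G₂ w₂ hTlt hsymm₂ hnn₂ hedge₂ hT3 h2c₂
    x c hxT hcT (Ne.symm hcx) d hd₂
  -- convert it to a G-path
  have hQG : ∃ q : G.Walk x c, q.IsPath ∧ (∀ z ∈ q.support, z ∈ T) ∧ d ≤ q.wWeight w := by
    by_cases hxc : G.Adj x c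
    · have hdc : ∀ dd ∈ Q.darts, G.Adj dd.toProd.1 dd.toProd.2 := by
        intro dd _
        rcases dd.adj with ⟨h, _, _⟩ | ⟨h1, h2⟩ | ⟨h1, h2⟩
        · exact h
        · rw [h1, h2]; exact hxc
        · rw [h1, h2]; exact hxc.symm
      obtain ⟨q, hs', hdarts⟩ := convertWalk Q hdc
      refine ⟨q, by rw [Walk.isPath_def, hs']; exact hQp.support_nodup,
        by rw [hs']; exact hQs, ?_⟩
      have e1 : Q.wWeight w₂ = Q.wWeight w := by
        refine wWeight_congr w₂ w Q ?_
        intro dd hdd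
        rw [hw₂def]
        simp [hdc dd hdd]
      have e2 : q.wWeight w = Q.wWeight w := wWeight_eq_of_darts_eq w Q q hdarts
      rw [e2, ← e1]
      exact hQw
    · cases Q with
      | nil => exact absurd rfl hcx
      | @cons _ b _ h' rest =>
        have hQp' := hQp
        rw [Walk.cons_isPath_iff] at hQp'
        obtain ⟨hrestp, hxrest⟩ := hQp'
        have hbc : b ≠ c := by
          rintro rfl
          have hnil : rest = Walk.nil := (Walk.isPath_iff_eq_nil (p := rest)).1 hrestp
          rw [hnil] at hQw
          rw [wWeight_cons, wWeight_nil] at hQw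
          have hw0 : w₂ x b = 0 := by rw [hw₂def]; simp [hxc]
          rw [hw0] at hQw
          linarith
        have hfirst : G.Adj x b := by
          rcases h' with ⟨h, _, _⟩ | ⟨_, h2⟩ | ⟨h1, _⟩
          · exact h
          · exact absurd h2 hbc
          · exact absurd h1 (Ne.symm hcx)
        have hdc : ∀ dd ∈ (Walk.cons h' rest).darts, G.Adj dd.toProd.1 dd.toProd.2 := by
          intro dd hdd
          rw [Walk.darts_cons] at hdd
          rcases List.mem_cons.1 hdd with rfl | hdd'
          · exact hfirst
          · have hm1 := rest.dart_fst_mem_support_of_mem_darts hdd'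
            have hm2 := rest.dart_snd_mem_support_of_mem_darts hdd'
            have hfxne : dd.toProd.1 ≠ x := fun hh => hxrest (hh ▸ hm1)
            have hsxne : dd.toProd.2 ≠ x := fun hh => hxrest (hh ▸ hm2)
            rcases dd.adj with ⟨h, _, _⟩ | ⟨h1, _⟩ | ⟨_, h2⟩
            · exact h
            · exact absurd h1 hfxne
            · exact absurd h2 hsxne
        obtain ⟨q, hs', hdarts⟩ := convertWalk (Walk.cons h' rest) hdc
        refine ⟨q, by rw [Walk.isPath_def, hs']; exact hQp.support_nodup,
          by rw [hs']; exact hQs, ?_⟩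
        have e1 : (Walk.cons h' rest).wWeight w₂ = (Walk.cons h' rest).wWeight w := by
          refine wWeight_congr w₂ w _ ?_
          intro dd hdd
          rw [hw₂def]
          simp [hdc dd hdd]
        have e2 : q.wWeight w = (Walk.cons h' rest).wWeight w :=
          wWeight_eq_of_darts_eq w _ q hdarts
        rw [e2, ← e1]
        exact hQw
  obtain ⟨q, hqp, hqs, hqw⟩ := hQG
  by_cases hyc : y = c
  · subst hyc
    exact ⟨q, hqp, fun z hz => hTsub (hqs z hz), hqw⟩
  · -- extend from c to y outside of T
    set A₁ : V → Prop := fun z => z ∈ s ∧ z ≠ x ∧ ¬ KP z ∧ z ≠ c with hA₁def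
    obtain ⟨p, hp⟩ := h2c x hx y hy c hcs (Ne.symm hxy) hcx
    obtain ⟨u', t, hA1, hA2, hA3, hA4, hA5⟩ :=
      exitLemma (A := A₁) p ⟨hy, Ne.symm hxy, hKPy, hyc⟩ (fun h => h.2.2.2 rfl)
    have htm := hp t hA4
    have htc : t = c := by
      by_contra hcon
      have hKPt : KP t := by
        by_contra hK
        exact hA2 ⟨htm.1, htm.2, hK, hcon⟩
      exact hA1.2.2.1 (hclosure t u' hKPt hA3.symm ⟨hA1.1, hA1.2.1, hA1.2.2.2⟩)
    have hRy : Reach G (fun z => A₁ z ∨ z = c) y c :=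
      (hA5.mono (fun z hz => Or.inl hz)).trans
        (Reach.edge (htc ▸ hA3) (Or.inl hA1) (Or.inr rfl))
    obtain ⟨r, hr⟩ := hRy.symm
    have hr'p := r.bypass_isPath
    have hr's : ∀ z ∈ r.bypass.support, (A₁ z ∨ z = c) :=
      fun z hz => hr z (r.support_bypass_subset hz)
    refine ⟨q.append r.bypass, isPath_append hqp hr'p ?_, ?_, ?_⟩
    · intro zz hz1 hz2
      rcases hr's zz hz2 with hA | rfl
      · exfalso
        rcases (hTmem zz).1 (hqs zz hz1) with h | h | hK
        · exact hA.2.1 h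
        · exact hA.2.2.2 h
        · exact hA.2.2.1 hK
      · rfl
    · intro zz hzz
      rw [Walk.support_append] at hzz
      rcases List.mem_append.1 hzz with h | h
      · exact hTsub (hqs zz h)
      · rcases hr's zz (List.mem_of_mem_tail h) with hA | rfl
        · exact hA.1
        · exact hcs
    · rw [wWeight_append]
      have hnn' := wWeight_nonneg hnn r.bypass
      linarith

lemma contractCase (G : SimpleGraph V) (w : V → V → ℝ) (s : Finset V)
    (hsymm : ∀ u v, w u v = w v u) (hnn : ∀ u v, 0 ≤ w u v)
    (hedge : ∀ u v, G.Adj u v → u ∈ s ∧ v ∈ s)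
    (h4 : 4 ≤ s.card) (h2c : TwoConnOn G s)
    (x y : V) (hx : x ∈ s) (hy : y ∈ s) (hxy : x ≠ y) (d : ℝ)
    (hd : ∀ v ∈ s, v ≠ x → v ≠ y → d ≤ G.wDeg w v)
    (Hcond : ∀ c ∈ s, c ≠ x → ∀ u₁ ∈ s, ∀ u₂ ∈ s, u₁ ≠ x → u₁ ≠ c → u₂ ≠ x → u₂ ≠ c →
      Reach G (fun z => z ∈ s ∧ z ≠ x ∧ z ≠ c) u₁ u₂)
    (IH : IHtype V s.card) :
    Concl G w s x y d := by
  classical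
  -- choose the heaviest x-neighbour a ≠ y
  obtain ⟨z, hzs, hzx, hzy⟩ := third_vertex (by omega) hx hy
  obtain ⟨b₀, hb₀adj, hb₀s, hb₀y⟩ := firstStep (h2c y hy x hx z hzs hxy hzy) (Ne.symm hzx)
  set Nx : Finset V := s.filter (fun u => G.Adj x u ∧ u ≠ y) with hNxdef
  have hNxne : Nx.Nonempty := ⟨b₀, by simp [hNxdef, Finset.mem_filter, hb₀s, hb₀adj, hb₀y]⟩
  obtain ⟨a, haNx, hamax⟩ := Finset.exists_max_image Nx (fun u => w x u) hNxne
  rw [hNxdef, Finset.mem_filter] at haNx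
  have has : a ∈ s := haNx.1
  have hax : G.Adj x a := haNx.2.1
  have hay : a ≠ y := haNx.2.2
  have hamax' : ∀ u ∈ s, G.Adj x u → u ≠ y → w x u ≤ w x a := by
    intro u hu h1 h2
    exact hamax u (by rw [hNxdef, Finset.mem_filter]; exact ⟨hu, h1, h2⟩)
  have haxne : x ≠ a := hax.ne
  -- the contracted graph
  set G' : SimpleGraph V := {
    Adj := fun u v => u ≠ v ∧ u ≠ a ∧ v ≠ a ∧
      ((u ≠ x ∧ v ≠ x ∧ G.Adj u v) ∨ (u = x ∧ (G.Adj x v ∨ G.Adj a v)) ∨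
        (v = x ∧ (G.Adj u x ∨ G.Adj u a))),
    symm := by
      constructor
      rintro u v ⟨h1, h2, h3, h4⟩
      refine ⟨h1.symm, h3, h2, ?_⟩
      rcases h4 with ⟨hu, hv, hadj⟩ | ⟨rfl, h⟩ | ⟨rfl, h⟩
      · exact Or.inl ⟨hv, hu, hadj.symm⟩
      · exact Or.inr (Or.inr ⟨rfl, h.imp (fun t => t.symm) (fun t => t.symm)⟩)
      · exact Or.inr (Or.inl ⟨rfl, h.imp (fun t => t.symm) (fun t => t.symm)⟩)
    loopless := ⟨fun u h => h.1 rfl⟩ } with hG'def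
  have hG'adj : ∀ u v, G'.Adj u v ↔ (u ≠ v ∧ u ≠ a ∧ v ≠ a ∧
      ((u ≠ x ∧ v ≠ x ∧ G.Adj u v) ∨ (u = x ∧ (G.Adj x v ∨ G.Adj a v)) ∨
        (v = x ∧ (G.Adj u x ∨ G.Adj u a)))) := fun u v => Iff.rfl
  -- the new weights
  set w' : V → V → ℝ := fun u v =>
    if u = x ∧ v ≠ x then (if G.Adj a v then w x a + w a v else w x v)
    else if v = x ∧ u ≠ x then (if G.Adj a u then w x a + w a u else w u x)
    else w u v with hw'def
  have hw'xv : ∀ v, v ≠ x → w' x v = if G.Adj a v then w x a + w a v else w x v := by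
    intro v hv; simp [hw'def, hv]
  have hw'vx : ∀ v, v ≠ x → w' v x = if G.Adj a v then w x a + w a v else w v x := by
    intro v hv; simp [hw'def, hv]
  have hw'uv : ∀ u v, u ≠ x → v ≠ x → w' u v = w u v := by
    intro u v hu hv; simp [hw'def, hu, hv]
  have hsymm' : ∀ u v, w' u v = w' v u := by
    intro u v
    by_cases hu : u = x <;> by_cases hv : v = x
    · rw [hu, hv]
    · rw [hu, hw'xv v hv, hw'vx v hv]
      by_cases h : G.Adj a v <;> simp [h, hsymm x v]
    · rw [hv, hw'vx u hu, hw'xv u hu]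
      by_cases h : G.Adj a u <;> simp [h, hsymm x u]
    · rw [hw'uv u v hu hv, hw'uv v u hv hu, hsymm]
  have hnn' : ∀ u v, 0 ≤ w' u v := by
    intro u v
    by_cases hu : u = x <;> by_cases hv : v = x
    · rw [hu, hv]; simp [hw'def, hnn]
    · rw [hu, hw'xv v hv]
      by_cases h : G.Adj a v <;> simp [h, hnn, add_nonneg (hnn x a) (hnn a v)]
    · rw [hv, hw'vx u hu]
      by_cases h : G.Adj a u <;> simp [h, hnn, add_nonneg (hnn x a) (hnn a u)]
    · rw [hw'uv u v hu hv]; exact hnn u v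
  set s' : Finset V := s.erase a with hs'def
  have hs'mem : ∀ z, z ∈ s' ↔ z ≠ a ∧ z ∈ s := by
    intro z; rw [hs'def, Finset.mem_erase]
  have hxs' : x ∈ s' := (hs'mem x).2 ⟨haxne, hx⟩
  have hys' : y ∈ s' := (hs'mem y).2 ⟨Ne.symm hay, hy⟩
  have hs'card : s'.card = s.card - 1 := by rw [hs'def]; exact Finset.card_erase_of_mem has
  have hedge' : ∀ u v, G'.Adj u v → u ∈ s' ∧ v ∈ s' := by
    intro u v huv
    rw [hG'adj] at huv
    obtain ⟨h1, h2, h3, hor⟩ := huv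
    rcases hor with ⟨_, _, hadj⟩ | ⟨rfl, h⟩ | ⟨rfl, h⟩
    · exact ⟨(hs'mem u).2 ⟨h2, (hedge _ _ hadj).1⟩, (hs'mem v).2 ⟨h3, (hedge _ _ hadj).2⟩⟩
    · refine ⟨hxs', (hs'mem v).2 ⟨h3, ?_⟩⟩
      rcases h with h | h
      · exact (hedge _ _ h).2
      · exact (hedge _ _ h).2
    · refine ⟨(hs'mem u).2 ⟨h2, ?_⟩, hxs'⟩
      rcases h with h | h
      · exact (hedge _ _ h).1
      · exact (hedge _ _ h).1
  -- two-connectivity of the contracted graph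
  have h2c' : TwoConnOn G' s' := by
    intro v hv u₁ hu₁ u₂ hu₂ h1 h2
    have hvm := (hs'mem v).1 hv
    have hu₁m := (hs'mem u₁).1 hu₁
    have hu₂m := (hs'mem u₂).1 hu₂
    by_cases hvx : v = x
    · rw [hvx] at h1 h2 ⊢
      have hr := Hcond a has (Ne.symm haxne) u₁ hu₁m.2 u₂ hu₂m.2 h1 hu₁m.1 h2 hu₂m.1
      refine Reach.mono ?_ (Reach.transfer ?_ hr)
      · intro zz hzz; exact ⟨(hs'mem zz).2 ⟨hzz.2.2, hzz.1⟩, hzz.2.1⟩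
      · intro p q hp hq hpq
        rw [hG'adj]
        exact ⟨hpq.ne, hp.2.2, hq.2.2, Or.inl ⟨hp.2.1, hq.2.1, hpq⟩⟩
    · have hxgood : x ∈ s' ∧ x ≠ v := ⟨hxs', fun h => hvx h.symm⟩
      have key : ∀ u, u ∈ s' → u ≠ v → Reach G' (fun z => z ∈ s' ∧ z ≠ v) u x := by
        intro u hu hune
        by_cases hux : u = x
        · subst hux; exact Reach.refl hxgood
        · have hum := (hs'mem u).1 hu
          obtain ⟨p, hp⟩ := h2c v ((hs'mem v).1 hv).2 u hum.2 x hx hune (fun h => hvx h.symm)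
          obtain ⟨u', t, hA1, hA2, hA3, hA4, hA5⟩ :=
            exitLemma (A := fun z => z ∈ s ∧ z ≠ v ∧ z ≠ x ∧ z ≠ a) p
              ⟨hum.2, hune, hux, hum.1⟩ (by intro h; exact h.2.2.1 rfl)
          have htmem := hp t hA4
          have htax : t = x ∨ t = a := by
            by_contra hcon; push_neg at hcon
            exact hA2 ⟨htmem.1, htmem.2, hcon.1, hcon.2⟩
          have hadjG' : G'.Adj u' x := by
            rw [hG'adj]
            refine ⟨hA1.2.2.1, hA1.2.2.2, haxne, Or.inr (Or.inr ⟨rfl, ?_⟩)⟩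
            rcases htax with rfl | rfl
            · exact Or.inl hA3
            · exact Or.inr hA3
          have hreach' : Reach G' (fun z => z ∈ s' ∧ z ≠ v) u u' := by
            refine Reach.mono ?_ (Reach.transfer ?_ hA5)
            · intro zz hzz; exact ⟨(hs'mem zz).2 ⟨hzz.2.2.2, hzz.1⟩, hzz.2.1⟩
            · intro p' q' hp' hq' hpq
              rw [hG'adj]
              exact ⟨hpq.ne, hp'.2.2.2, hq'.2.2.2, Or.inl ⟨hp'.2.2.1, hq'.2.2.1, hpq⟩⟩
          exact hreach'.trans
            (Reach.edge hadjG' ⟨(hs'mem u').2 ⟨hA1.2.2.2, hA1.1⟩, hA1.2.1⟩ hxgood)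
      exact (key u₁ hu₁ h1).trans (key u₂ hu₂ h2).symm
  -- degrees
  have hd' : ∀ v ∈ s', v ≠ x → v ≠ y → d ≤ G'.wDeg w' v := by
    intro v hv hvx hvy
    rw [hs'mem] at hv
    obtain ⟨hva, hvs⟩ := hv
    refine le_trans (hd v hvs hvx hvy) ?_
    rw [wDeg_eq_sum, wDeg_eq_sum]
    have hax' : a ≠ x := Ne.symm haxne
    have hsub : ({a, x} : Finset V) ⊆ Finset.univ := Finset.subset_univ _
    have hiff : ∀ u, u ≠ a → u ≠ x → (G.Adj v u ↔ G'.Adj v u) := by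
      intro u hua hux
      rw [hG'adj]
      constructor
      · intro h
        exact ⟨h.ne, hva, hua, Or.inl ⟨hvx, hux, h⟩⟩
      · rintro ⟨_, _, _, ⟨_, _, hadj⟩ | ⟨hvx', _⟩ | ⟨hux', _⟩⟩
        · exact hadj
        · exact absurd hvx' hvx
        · exact absurd hux' hux
    have hcongr : ∀ u ∈ Finset.univ \ ({a, x} : Finset V),
        (if G.Adj v u then w v u else 0) = (@ite ℝ (G'.Adj v u) (Classical.propDecidable _) (w' v u) 0) := by
      intro u hu
      rw [Finset.mem_sdiff, Finset.mem_insert, Finset.mem_singleton] at hu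
      push_neg at hu
      obtain ⟨hua, hux⟩ := hu.2
      by_cases h : G.Adj v u
      · rw [if_pos h, if_pos ((hiff u hua hux).1 h), hw'uv v u hvx hux]
      · rw [if_neg h, if_neg (fun hh => h ((hiff u hua hux).2 hh))]
    have hG'va : ¬ G'.Adj v a := by
      rw [hG'adj]; rintro ⟨_, _, hc, _⟩; exact hc rfl
    have hG'vx : G'.Adj v x ↔ (G.Adj v x ∨ G.Adj v a) := by
      rw [hG'adj]
      constructor
      · rintro ⟨_, _, _, ⟨_, hc, _⟩ | ⟨hc, _⟩ | ⟨_, h⟩⟩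
        · exact absurd rfl hc
        · exact absurd hc hvx
        · exact h
      · intro h
        exact ⟨hvx, hva, haxne, Or.inr (Or.inr ⟨rfl, h⟩)⟩
    have hw'vx' : w' v x = if G.Adj a v then w x a + w a v else w v x := hw'vx v hvx
    have hpt : (if G.Adj v a then w v a else 0) + (if G.Adj v x then w v x else 0) ≤
        (@ite ℝ (G'.Adj v a) (Classical.propDecidable _) (w' v a) 0) + (@ite ℝ (G'.Adj v x) (Classical.propDecidable _) (w' v x) 0) := by
      rw [if_neg hG'va]
      by_cases hva' : G.Adj v a
      · have hav' : G.Adj a v := hva'.symm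
        rw [if_pos hva', if_pos (hG'vx.2 (Or.inr hva')), hw'vx', if_pos hav']
        have hle : (if G.Adj v x then w v x else 0) ≤ w x a := by
          by_cases h : G.Adj v x
          · rw [if_pos h]
            calc w v x = w x v := hsymm v x
            _ ≤ w x a := hamax' v hvs h.symm hvy
          · rw [if_neg h]; exact hnn x a
        have hvav : w v a = w a v := hsymm v a
        linarith
      · rw [if_neg hva']
        have hav' : ¬ G.Adj a v := fun h => hva' h.symm
        by_cases h : G.Adj v x
        · rw [if_pos h, if_pos (hG'vx.2 (Or.inl h)), hw'vx', if_neg hav']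
        · rw [if_neg h, if_neg (by rw [hG'vx]; rintro (hc | hc); exact h hc; exact hva' hc)]
    show (∑ u : V, if G.Adj v u then w v u else 0) ≤ ∑ u : V, @ite ℝ (G'.Adj v u) (Classical.propDecidable _) (w' v u) 0
    calc (∑ u : V, if G.Adj v u then w v u else 0)
        = (∑ u ∈ Finset.univ \ ({a, x} : Finset V), if G.Adj v u then w v u else 0)
          + ((if G.Adj v a then w v a else 0) + (if G.Adj v x then w v x else 0)) := by
          rw [← Finset.sum_sdiff hsub, Finset.sum_pair hax']
      _ = (∑ u ∈ Finset.univ \ ({a, x} : Finset V), @ite ℝ (G'.Adj v u) (Classical.propDecidable _) (w' v u) 0)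
          + ((if G.Adj v a then w v a else 0) + (if G.Adj v x then w v x else 0)) := by
          rw [Finset.sum_congr rfl hcongr]
      _ ≤ (∑ u ∈ Finset.univ \ ({a, x} : Finset V), @ite ℝ (G'.Adj v u) (Classical.propDecidable _) (w' v u) 0)
          + ((@ite ℝ (G'.Adj v a) (Classical.propDecidable _) (w' v a) 0) + (@ite ℝ (G'.Adj v x) (Classical.propDecidable _) (w' v x) 0)) := by
          exact add_le_add_right hpt _
      _ = (∑ u : V, @ite ℝ (G'.Adj v u) (Classical.propDecidable _) (w' v u) 0) := by
          rw [← Finset.sum_sdiff hsub, Finset.sum_pair hax']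
  -- apply the induction hypothesis
  obtain ⟨Q, hQp, hQs, hQw⟩ := IH s' G' w' (by omega) hsymm' hnn' hedge' (by omega) h2c'
    x y hxs' hys' hxy d hd'
  -- lift the path back to G
  cases Q with
  | nil => exact absurd rfl hxy
  | @cons _ b _ h' rest =>
    rw [Walk.cons_isPath_iff] at hQp
    obtain ⟨hrestp, hxrest⟩ := hQp
    rw [hG'adj] at h'
    obtain ⟨hneq, _, hba, hor⟩ := h'
    have hb : G.Adj x b ∨ G.Adj a b := by
      rcases hor with ⟨hcontra, _, _⟩ | ⟨_, h⟩ | ⟨hbx, _⟩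
      · exact absurd rfl hcontra
      · exact h
      · exact absurd hbx (Ne.symm hneq)
    have hsuprest : ∀ z ∈ rest.support, z ∈ s' :=
      fun z hz => hQs z (by rw [Walk.support_cons]; exact List.mem_cons_of_mem _ hz)
    have hdartscond : ∀ dd ∈ rest.darts, G.Adj dd.toProd.1 dd.toProd.2 := by
      intro dd hdd
      have hm1 := rest.dart_fst_mem_support_of_mem_darts hdd
      have hm2 := rest.dart_snd_mem_support_of_mem_darts hdd
      have hfx : dd.toProd.1 ≠ x := fun hh => hxrest (hh ▸ hm1)
      have hsx : dd.toProd.2 ≠ x := fun hh => hxrest (hh ▸ hm2)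
      have := dd.adj
      rw [hG'adj] at this
      rcases this.2.2.2 with ⟨_, _, hadj⟩ | ⟨hc, _⟩ | ⟨hc, _⟩
      · exact hadj
      · exact absurd hc hfx
      · exact absurd hc hsx
    obtain ⟨restG, hsupeq, hdartseq⟩ := convertWalk rest hdartscond
    have hwrest1 : rest.wWeight w' = rest.wWeight w := by
      refine wWeight_congr w' w rest ?_
      intro dd hdd
      have hm1 := rest.dart_fst_mem_support_of_mem_darts hdd
      have hm2 := rest.dart_snd_mem_support_of_mem_darts hdd
      exact hw'uv _ _ (fun hh => hxrest (hh ▸ hm1)) (fun hh => hxrest (hh ▸ hm2))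
    have hwrest2 : restG.wWeight w = rest.wWeight w := wWeight_eq_of_darts_eq w rest restG hdartseq
    have hrestGp : restG.IsPath := by
      rw [Walk.isPath_def, hsupeq]; exact hrestp.support_nodup
    have hxrestG : x ∉ restG.support := by rw [hsupeq]; exact hxrest
    have harestG : a ∉ restG.support := by
      rw [hsupeq]; intro hcon
      exact ((hs'mem a).1 (hsuprest a hcon)).1 rfl
    have hsupsub : ∀ z ∈ restG.support, z ∈ s := by
      intro z hz; rw [hsupeq] at hz
      exact ((hs'mem z).1 (hsuprest z hz)).2
    have hQw' : d ≤ w' x b + rest.wWeight w' := by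
      rw [wWeight_cons] at hQw; exact hQw
    by_cases hab : G.Adj a b
    · have hwxb : w' x b = w x a + w a b := by
        rw [hw'xv b (Ne.symm hneq), if_pos hab]
      refine ⟨Walk.cons hax (Walk.cons hab restG), ?_, ?_, ?_⟩
      · rw [Walk.cons_isPath_iff, Walk.cons_isPath_iff]
        refine ⟨⟨hrestGp, harestG⟩, ?_⟩
        rw [Walk.support_cons]
        intro hcon
        rcases List.mem_cons.1 hcon with hc | hc
        · exact haxne hc
        · exact hxrestG hc
      · intro zz hzz
        rw [Walk.support_cons, Walk.support_cons] at hzz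
        rcases List.mem_cons.1 hzz with rfl | hc
        · exact hx
        · rcases List.mem_cons.1 hc with rfl | hc'
          · exact has
          · exact hsupsub _ hc'
      · rw [wWeight_cons, wWeight_cons, hwrest2]
        rw [hwxb, hwrest1] at hQw'
        linarith
    · have hxb : G.Adj x b := hb.resolve_right hab
      have hwxb : w' x b = w x b := by
        rw [hw'xv b (Ne.symm hneq), if_neg hab]
      refine ⟨Walk.cons hxb restG, ?_, ?_, ?_⟩
      · rw [Walk.cons_isPath_iff]
        exact ⟨hrestGp, hxrestG⟩
      · intro zz hzz
        rw [Walk.support_cons] at hzz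
        rcases List.mem_cons.1 hzz with rfl | hc
        · exact hx
        · exact hsupsub _ hc
      · rw [wWeight_cons, hwrest2]
        rw [hwxb, hwrest1] at hQw'
        linarith



theorem main : ∀ (n : ℕ) (s : Finset V) (G : SimpleGraph V) (w : V → V → ℝ),
    s.card ≤ n →
    (∀ u v, w u v = w v u) → (∀ u v, 0 ≤ w u v) →
    (∀ u v, G.Adj u v → u ∈ s ∧ v ∈ s) →
    3 ≤ s.card →
    TwoConnOn G s →
    ∀ x y : V, x ∈ s → y ∈ s → x ≠ y → ∀ d : ℝ,
      (∀ v ∈ s, v ≠ x → v ≠ y → d ≤ G.wDeg w v) →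
      Concl G w s x y d := by
  intro n
  induction n with
  | zero =>
    intro s G w hcard _ _ _ h3 _ _ _ _ _ _ _ _
    omega
  | succ n IHn =>
    intro s G w hcard hsymm hnn hedge h3 h2c x y hx hy hxy d hd
    have IH : IHtype V s.card := by
      intro s' G' w' hlt h1 h2 h3' h4' h5' x' y' hx' hy' hxy' d' hd'
      exact IHn s' G' w' (by omega) h1 h2 h3' h4' h5' x' y' hx' hy' hxy' d' hd'
    rcases le_or_gt d 0 with hd0 | hd0
    · exact trivialCase G w s hnn h3 h2c x y hx hy hxy d hd0
    by_cases hc3 : s.card = 3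
    · exact base3 G w s hsymm hedge hc3 h2c x y hx hy hxy d hd
    have h4 : 4 ≤ s.card := by omega
    by_cases Hcond : ∀ c ∈ s, c ≠ x → ∀ u₁ ∈ s, ∀ u₂ ∈ s, u₁ ≠ x → u₁ ≠ c → u₂ ≠ x → u₂ ≠ c →
        Reach G (fun z => z ∈ s ∧ z ≠ x ∧ z ≠ c) u₁ u₂
    · exact contractCase G w s hsymm hnn hedge h4 h2c x y hx hy hxy d hd Hcond IH
    · push_neg at Hcond
      obtain ⟨c, hcs, hcx, u₁, hu₁s, u₂, hu₂s, h1x, h1c, h2x, h2c', hnr⟩ := Hcond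
      by_cases hr1 : Reach G (fun z => z ∈ s ∧ z ≠ x ∧ z ≠ c) u₁ y
      · refine cutCase G w s hsymm hnn hedge h2c x y hx hy hxy d hd0 hd c hcs hcx u₂ u₁
          ⟨hu₂s, h2x, h2c'⟩ ⟨hu₁s, h1x, h1c⟩ (fun h => hnr h.symm) ?_ IH
        intro h
        exact hnr (hr1.trans h.symm)
      · exact cutCase G w s hsymm hnn hedge h2c x y hx hy hxy d hd0 hd c hcs hcx u₁ u₂
          ⟨hu₁s, h1x, h1c⟩ ⟨hu₂s, h2x, h2c'⟩ hnr hr1 IH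

end Main
end BF

theorem stmt0 [Fintype V] (G : SimpleGraph V) (w : V → V → ℝ)
    (hsymm : ∀ u v, w u v = w v u) (hnn : ∀ u v, 0 ≤ w u v)
    (h2 : G.TwoConnected) (x y : V) (hxy : x ≠ y) (d : ℝ)
    (hd : ∀ v : V, v ≠ x → v ≠ y → d ≤ G.wDeg w v) :
    ∃ p : G.Walk x y, p.IsPath ∧ d ≤ p.wWeight w := by
  classical
  have hcard : 3 ≤ (Finset.univ : Finset V).card := by
    have := h2.1
    rwa [Nat.card_eq_fintype_card, ← Finset.card_univ] at this
  have h2c : BF.TwoConnOn G (Finset.univ : Finset V) := by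
    intro v _ u₁ _ u₂ _ h1 h2'
    have hconn := (h2.2 v).preconnected ⟨u₁, h1⟩ ⟨u₂, h2'⟩
    obtain ⟨p⟩ := hconn
    let f : G.induce {u : V | u ≠ v} →g G := ⟨Subtype.val, fun {a b} h => h⟩
    refine ⟨p.map f, ?_⟩
    intro z hz
    rw [SimpleGraph.Walk.support_map] at hz
    obtain ⟨⟨z', hz'⟩, _, rfl⟩ := List.mem_map.1 hz
    exact ⟨Finset.mem_univ _, hz'⟩
  obtain ⟨p, hpath, _, hw⟩ := BF.main (Finset.univ : Finset V).card Finset.univ G w le_rfl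
    hsymm hnn (fun u v _ => ⟨Finset.mem_univ _, Finset.mem_univ _⟩) hcard h2c x y
    (Finset.mem_univ _) (Finset.mem_univ _) hxy d (fun v _ => hd v)
  exact ⟨p, hpath, hw⟩
end

section
/- For every real number d > 0 there exists a 2-connected weighted graph G with two distinguished vertices x and y such that d^w(v1)+d^w(v2)+d^w(v3) ≥ 3d holds vacuously for every three pairwise nonadjacent vertices v1, v2, v3 in V(G)\{x,y} (because no three pairwise nonadjacent vertices exist in G), yet G contains neither an (x,y)-path of weight at least d nor a Hamilton (x,y)-path. (Concretely: take G to be the union of two complete graphs, each on at least 3 vertices, sharing exactly the two vertices x and y, with every edge given weight 0.) -/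
open SimpleGraph

variable {V : Type*}

/-- Two triangles glued along the vertices `0` and `1`:
the complete graph on `Fin 4` minus the edge `{2,3}`. -/
def G4 : SimpleGraph (Fin 4) where
  Adj u v := u ≠ v ∧ (u.val < 2 ∨ v.val < 2)
  symm := ⟨fun u v h => ⟨h.1.symm, h.2.symm⟩⟩
  loopless := ⟨fun u h => h.1 rfl⟩

instance : DecidableRel G4.Adj :=
  fun u v => inferInstanceAs (Decidable (u ≠ v ∧ (u.val < 2 ∨ v.val < 2)))

lemma conn_of_hub {W : Type*} (H : SimpleGraph W) (h : W)
    (hh : ∀ u, u ≠ h → H.Adj h u) : H.Connected := by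
  rw [connected_iff]
  have ra : ∀ a, H.Reachable h a := by
    intro a
    by_cases e : a = h
    · subst e; exact Reachable.refl _
    · exact (hh a e).reachable
  exact ⟨fun a b => (ra a).symm.trans (ra b), ⟨h⟩⟩

lemma nonadj : ∀ a b : Fin 4, a ≠ 0 → a ≠ 1 → b ≠ 0 → b ≠ 1 → ¬ G4.Adj a b := by decide

lemma no_ham (p : G4.Walk 0 1) (hp : p.IsPath) : ∃ v : Fin 4, v ∉ p.support := by
  by_contra hc
  push_neg at hc
  have hnd := hp.support_nodup
  have hlen : p.support.length = 4 := by
    have h1 : p.support.toFinset = Finset.univ := by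
      ext v; simp [hc]
    have h2 := List.toFinset_card_of_nodup hnd
    rw [h1] at h2
    simpa using h2.symm
  have hl : p.length = 3 := by
    have := SimpleGraph.Walk.length_support p
    omega
  cases p with
  | cons h₁ q =>
    cases q with
    | nil => simp at hl
    | cons h₂ r =>
      cases r with
      | nil => simp at hl
      | cons h₃ s =>
        cases s with
        | cons h₄ t => simp [Walk.length_cons] at hl
        | nil =>
          simp [Walk.support_cons, List.nodup_cons] at hnd
          obtain ⟨⟨h0a, h0b⟩, ⟨hab, ha1⟩, hb1⟩ := hnd
          exact nonadj _ _ (Ne.symm h0a) ha1 (Ne.symm h0b) hb1 h₂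

theorem stmt7 (d : ℝ) (hd : 0 < d) :
    ∃ (V : Type) (_ : Fintype V) (G : SimpleGraph V) (w : V → V → ℝ) (x y : V),
      (∀ u v, w u v = w v u) ∧ (∀ u v, 0 ≤ w u v) ∧ G.TwoConnected ∧ x ≠ y ∧
      (¬ ∃ v₁ v₂ v₃ : V, v₁ ≠ x ∧ v₁ ≠ y ∧ v₂ ≠ x ∧ v₂ ≠ y ∧ v₃ ≠ x ∧ v₃ ≠ y ∧
        v₁ ≠ v₂ ∧ v₁ ≠ v₃ ∧ v₂ ≠ v₃ ∧
        ¬ G.Adj v₁ v₂ ∧ ¬ G.Adj v₁ v₃ ∧ ¬ G.Adj v₂ v₃) ∧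
      (∀ p : G.Walk x y, p.IsPath → p.wWeight w < d ∧ ∃ v : V, v ∉ p.support) := by
  refine ⟨Fin 4, inferInstance, G4, fun _ _ => 0, 0, 1, fun _ _ => rfl, fun _ _ => le_refl 0,
    ⟨by simp [Nat.card_eq_fintype_card], ?_⟩, by decide, ?_, ?_⟩
  · intro v
    obtain ⟨h, hh2, hhv⟩ : ∃ h : Fin 4, h.val < 2 ∧ h ≠ v := by
      by_cases h : v = 0
      · exact ⟨1, by norm_num, by simp [h]⟩
      · exact ⟨0, by norm_num, fun e => h e.symm⟩
    refine conn_of_hub _ ⟨h, hhv⟩ ?_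
    rintro ⟨u, hu⟩ huh
    have : h ≠ u := fun e => huh (Subtype.ext e.symm)
    exact ⟨this, Or.inl hh2⟩
  · rintro ⟨v₁, v₂, v₃, h₁, h₂, h₃, h₄, h₅, h₆, h₇, h₈, h₉, -, -, -⟩
    revert h₁ h₂ h₃ h₄ h₅ h₆ h₇ h₈ h₉
    revert v₁ v₂ v₃
    decide
  · intro p hp
    refine ⟨?_, no_ham p hp⟩
    have : p.wWeight (fun _ _ => 0) = 0 := by
      simp [SimpleGraph.Walk.wWeight]
    rw [this]; exact hd
end

section
/- Let G be a 2-connected weighted graph, let x be a vertex of G, and suppose every vertex v ≠ x satisfies d^w(v) ≥ d for a real number d. Then G contains a path starting at x of weight at least d. (This follows from the Bondy–Fan theorem by taking y to be any neighbor of x.) -/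
open SimpleGraph

variable {V : Type*}

private lemma wWeight_append {G : SimpleGraph V} (w : V → V → ℝ) {u v z : V}
    (p : G.Walk u v) (q : G.Walk v z) :
    (p.append q).wWeight w = p.wWeight w + q.wWeight w := by
  simp [Walk.wWeight, Walk.darts_append]

private lemma wWeight_cons {G : SimpleGraph V} (w : V → V → ℝ) {u v z : V}
    (h : G.Adj u v) (p : G.Walk v z) :
    (Walk.cons h p).wWeight w = w u v + p.wWeight w := by
  simp [Walk.wWeight]

private lemma wWeight_concat {G : SimpleGraph V} (w : V → V → ℝ) {u v z : V}
    (p : G.Walk u v) (h : G.Adj v z) :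
    (p.concat h).wWeight w = p.wWeight w + w v z := by
  simp [Walk.wWeight, Walk.darts_concat]

private lemma wWeight_reverse {G : SimpleGraph V} (w : V → V → ℝ)
    (hsymm : ∀ u v, w u v = w v u) {u v : V} (p : G.Walk u v) :
    p.reverse.wWeight w = p.wWeight w := by
  unfold Walk.wWeight
  rw [Walk.darts_reverse, List.map_reverse, List.sum_reverse, List.map_map]
  congr 1
  apply List.map_congr_left
  intro d _
  simp [Function.comp, hsymm]

theorem stmt14 [Fintype V] (G : SimpleGraph V) (w : V → V → ℝ)
    (hsymm : ∀ u v, w u v = w v u) (hnn : ∀ u v, 0 ≤ w u v)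
    (h2 : G.TwoConnected) (x : V) (d : ℝ)
    (hd : ∀ v : V, v ≠ x → d ≤ G.wDeg w v) :
    ∃ (z : V) (p : G.Walk x z), p.IsPath ∧ d ≤ p.wWeight w := by
  classical
  -- pick a lex-(weight, length)-maximal path starting at x
  obtain ⟨P, -, hmax⟩ := Finset.exists_max_image (Finset.univ : Finset (Σ z : V, G.Path x z))
      (fun q => toLex ((q.2 : G.Walk x q.1).wWeight w, (q.2 : G.Walk x q.1).length))
      ⟨⟨x, ⟨Walk.nil, Walk.IsPath.nil⟩⟩, Finset.mem_univ _⟩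
  obtain ⟨z, p, hp⟩ := P
  have hmax' : ∀ (z' : V) (q : G.Walk x z'), q.IsPath →
      toLex (q.wWeight w, q.length) ≤ toLex (p.wWeight w, p.length) :=
    fun z' q hq => hmax ⟨z', ⟨q, hq⟩⟩ (Finset.mem_univ _)
  have hW : ∀ (z' : V) (q : G.Walk x z'), q.IsPath → q.wWeight w ≤ p.wWeight w := by
    intro z' q hq
    have h := hmax' z' q hq
    rw [Prod.Lex.le_iff] at h
    rcases h with h | h
    · exact le_of_lt h
    · exact le_of_eq h.1
  -- all neighbors of z are on p
  have hsupp : ∀ u, G.Adj z u → u ∈ p.support := by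
    intro u hadj
    by_contra hu
    have hq : (p.concat hadj).IsPath := by
      rw [Walk.isPath_def, Walk.support_concat]
      rw [List.nodup_append]
      refine ⟨hp.support_nodup, List.nodup_singleton u, ?_⟩
      intro a ha b hb hab
      rw [List.mem_singleton] at hb
      subst hb hab
      exact hu ha
    have h := hmax' u (p.concat hadj) hq
    rw [Prod.Lex.le_iff, wWeight_concat, Walk.length_concat] at h
    rcases h with h | ⟨h1, h2⟩
    · simp only [ofLex_toLex, Prod.fst] at h
      nlinarith [hnn z u]
    · simp only [ofLex_toLex, Prod.snd] at h2
      omega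
  -- x has a neighbor
  have hcard : 3 ≤ Fintype.card V := by
    have := h2.1; rwa [Nat.card_eq_fintype_card] at this
  obtain ⟨y, hxy⟩ : ∃ y, G.Adj x y := by
    have hnt : Nontrivial V := Fintype.one_lt_card_iff_nontrivial.mp (by omega)
    obtain ⟨v, hvx⟩ := exists_ne x
    obtain ⟨u, hux, huv⟩ : ∃ u, u ≠ x ∧ u ≠ v := by
      by_contra hno
      push_neg at hno
      have hsub : (Finset.univ : Finset V) ⊆ {x, v} := by
        intro a _
        by_cases h : a = x
        · simp [h]
        · simp [hno a h]
      have h1 := Finset.card_le_card hsub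
      have h2 : ({x, v} : Finset V).card ≤ 2 := by
        apply le_trans (Finset.card_insert_le _ _); simp
      rw [Finset.card_univ] at h1
      omega
    have hc := h2.2 v
    have hx' : x ∈ {u : V | u ≠ v} := Ne.symm hvx
    have hu' : u ∈ {u : V | u ≠ v} := huv
    obtain ⟨W⟩ := hc.preconnected ⟨x, hx'⟩ ⟨u, hu'⟩
    have hne : (⟨x, hx'⟩ : {u : V | u ≠ v}) ≠ ⟨u, hu'⟩ := by
      simp [Subtype.ext_iff]; exact fun h => hux h.symm
    obtain ⟨b, hadj, q, -⟩ := Walk.not_nil_iff.mp (Walk.not_nil_of_ne (p := W) hne)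
    exact ⟨↑b, hadj⟩
  -- hence z ≠ x
  have hzx : z ≠ x := by
    rintro rfl
    have hnil : p = Walk.nil := by
      have := SimpleGraph.Path.loop_eq (⟨p, hp⟩ : G.Path z z)
      simpa [SimpleGraph.Path.nil] using congrArg Subtype.val this
    have hy := hsupp y hxy
    rw [hnil] at hy
    simp only [Walk.support_nil, List.mem_singleton] at hy
    exact G.irrefl (hy ▸ hxy)
  -- key: each neighbor u of z has a dart of p starting at u with big weight
  have key : ∀ u, G.Adj z u →
      ∃ D ∈ p.darts, D.toProd.1 = u ∧ w z u ≤ w D.toProd.1 D.toProd.2 := by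
    intro u hadj
    have husupp : u ∈ p.support := hsupp u hadj
    have huz : u ≠ z := fun h => G.irrefl (h ▸ hadj)
    have hdrop : ¬ (p.dropUntil u husupp).Nil := Walk.not_nil_of_ne huz
    obtain ⟨u', hadj', r, hr⟩ := Walk.not_nil_iff.mp hdrop
    have hspec : p = (p.takeUntil u husupp).append (Walk.cons hadj' r) := by
      rw [← hr]; exact (Walk.take_spec p husupp).symm
    set q := p.takeUntil u husupp with hqdef
    refine ⟨⟨(u, u'), hadj'⟩, ?_, rfl, ?_⟩
    · rw [hspec, Walk.darts_append, Walk.darts_cons]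
      simp
    · -- rotation
      have hpn : p.support.Nodup := hp.support_nodup
      have hnodup : (q.support ++ r.support).Nodup := by
        rw [hspec, Walk.support_append] at hpn
        simpa using hpn
    -- new path
      have hp' : (q.append (Walk.cons hadj.symm r.reverse)).IsPath := by
        rw [Walk.isPath_def, Walk.support_append]
        have : (Walk.cons hadj.symm r.reverse).support.tail = r.reverse.support := rfl
        rw [this, Walk.support_reverse]
        exact ((List.Perm.append_left q.support (List.reverse_perm r.support)).nodup_iff).mpr hnodup
      have hle := hW u' _ hp'
      rw [hspec, wWeight_append, wWeight_cons] at hle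
      rw [wWeight_append, wWeight_cons, wWeight_reverse w hsymm] at hle
      have : w u z ≤ w u u' := by linarith
      calc w z u = w u z := hsymm z u
        _ ≤ w u u' := this
  -- sum up
  have hdarts_nodup : p.darts.Nodup := by
    have he : (p.darts.map SimpleGraph.Dart.edge).Nodup := hp.isTrail.edges_nodup
    exact he.of_map
  choose D hDmem hDfst hDle using key
  have hdeg : G.wDeg w z ≤ p.wWeight w := by
    have hset : {u : V | G.Adj z u} = ↑((G.neighborSet z).toFinset) := by
      ext u; simp [SimpleGraph.neighborSet]; exact Set.mem_toFinset.symm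
    rw [SimpleGraph.wDeg, hset, finsum_mem_coe_finset]
    set N := (G.neighborSet z).toFinset with hN
    have hmemN : ∀ a : {u // u ∈ N}, G.Adj z a.1 := by
      intro a
      exact Set.mem_toFinset.mp a.2
    calc ∑ u ∈ N, w z u = ∑ a ∈ N.attach, w z a.1 := by
          rw [Finset.sum_attach]
      _ ≤ ∑ a ∈ N.attach, (fun D => w D.toProd.1 D.toProd.2) (D a.1 (hmemN a)) := by
          apply Finset.sum_le_sum
          intro a _
          exact hDle a.1 (hmemN a)
      _ = ∑ d ∈ N.attach.image (fun a => D a.1 (hmemN a)), w d.toProd.1 d.toProd.2 := by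
          rw [Finset.sum_image]
          intro a _ b _ hab
          have h1 := hDfst a.1 (hmemN a)
          have h2 := hDfst b.1 (hmemN b)
          apply Subtype.ext
          simp only at hab
          rw [← h1, ← h2, hab]
      _ ≤ ∑ d ∈ p.darts.toFinset, w d.toProd.1 d.toProd.2 := by
          apply Finset.sum_le_sum_of_subset_of_nonneg
          · intro d hd
            rw [Finset.mem_image] at hd
            obtain ⟨a, -, rfl⟩ := hd
            rw [List.mem_toFinset]
            exact hDmem a.1 (hmemN a)
          · intro d _ _
            exact hnn _ _
      _ = p.wWeight w := List.sum_toFinset _ hdarts_nodup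
  exact ⟨z, p, hp, le_trans (hd z hzx) hdeg⟩
end
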